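/- Let k ≥ 1 be an integer, let c₁,…,c_k be nonnegative reals with S := Σ_{i=1}^k c_i > 0, and let ℓ be a real with ℓ ≥ k. Then Σ_{i=1}^k c_i · e^{−ℓ·c_i/S} ≤ (k/(e·ℓ)) · S. -/

import Mathlib

open Finset

lemma te_bound (t : ℝ) (ht : 0 ≤ t) : t * Real.exp (-t) ≤ (Real.exp 1)⁻¹ := by
  have h : t ≤ Real.exp (t - 1) := by
    have := Real.add_one_le_exp (t - 1); linarith
  calc t * Real.exp (-t) ≤ Real.exp (t - 1) * Real.exp (-t) := by
        exact mul_le_mul_of_nonneg_right h (Real.exp_nonneg _)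
    _ = (Real.exp 1)⁻¹ := by
        rw [← Real.exp_add, ← Real.exp_neg]; ring_nf

/-- One-round contraction inequality for `k`-means∥ with `ℓ ≥ k`:
`Σᵢ cᵢ · e^{−ℓ·cᵢ/S} ≤ (k/(e·ℓ)) · S` where `S = Σᵢ cᵢ > 0`. -/
theorem contraction_large_ell (k : ℕ) (hk : 1 ≤ k) (c : Fin k → ℝ)
    (hc : ∀ i, 0 ≤ c i) (hS : 0 < ∑ i, c i)
    (ℓ : ℝ) (hℓk : (k : ℝ) ≤ ℓ) :
    ∑ i, c i * Real.exp (-ℓ * c i / ∑ j, c j) ≤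
      ((k : ℝ) / (Real.exp 1 * ℓ)) * ∑ i, c i := by
  set S := ∑ j, c j with hSdef
  have hℓ : 0 < ℓ := lt_of_lt_of_le (by exact_mod_cast hk) hℓk
  have hterm : ∀ i, c i * Real.exp (-ℓ * c i / S) ≤ S / (Real.exp 1 * ℓ) := by
    intro i
    have ht : 0 ≤ ℓ * c i / S := div_nonneg (mul_nonneg hℓ.le (hc i)) hS.le
    have := te_bound (ℓ * c i / S) ht
    have hrw : -ℓ * c i / S = -(ℓ * c i / S) := by ring
    rw [hrw]
    have h2 : c i * Real.exp (-(ℓ * c i / S)) =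
        (S / ℓ) * ((ℓ * c i / S) * Real.exp (-(ℓ * c i / S))) := by
      field_simp [hS.ne', hℓ.ne']
    rw [h2]
    calc (S / ℓ) * ((ℓ * c i / S) * Real.exp (-(ℓ * c i / S)))
        ≤ (S / ℓ) * (Real.exp 1)⁻¹ := by
          exact mul_le_mul_of_nonneg_left this (by positivity)
      _ = S / (Real.exp 1 * ℓ) := by rw [← div_eq_mul_inv, div_div, mul_comm ℓ]
  calc ∑ i, c i * Real.exp (-ℓ * c i / S) ≤ ∑ _i : Fin k, S / (Real.exp 1 * ℓ) :=
        Finset.sum_le_sum fun i _ => hterm i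
    _ = (k : ℝ) * (S / (Real.exp 1 * ℓ)) := by
        rw [Finset.sum_const, Finset.card_univ, Fintype.card_fin, nsmul_eq_mul]
    _ = ((k : ℝ) / (Real.exp 1 * ℓ)) * S := by ring
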